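/- arXiv:math/0307342 — 4 statements merged into one kernel-verified Lean document; each statement's English description precedes it below -/
import Mathlib

section
/- Let 𝔤 be a finite-dimensional real Lie algebra with a direct sum decomposition 𝔤 = W_1 ⊕ ... ⊕ W_m, set V^i = W_1 ⊕ ... ⊕ W_i, and assume [V^i, V^j] ⊆ V^{i+j} for all i, j (with the convention V^k = 𝔤 for k ≥ m). For ε > 0 let δ_ε(x_1 + ... + x_m) = Σ_{i=1}^m ε^i x_i (x_i ∈ W_i). Then for all x, y ∈ 𝔤 the limit [x,y]_n := lim_{ε→0⁺} δ_ε^{-1}([δ_ε x, δ_ε y]) exists; explicitly, if x = Σ_j x_j and y = Σ_k y_k then [x,y]_n = Σ_s Σ_{j+k=s} ([x_j, y_k])_s, where (·)_s denotes the W_s-component. Moreover [·,·]_n is bilinear, antisymmetric and satisfies the Jacobi identity, each δ_ε is a Lie algebra automorphism of (𝔤, [·,·]_n), and (𝔤, [·,·]_n) is a nilpotent Lie algebra. -/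
open Filter Topology

/-- Left-normed iterated bracket: `iterBr B z [x₁,…,xₖ] = B x₁ (B x₂ (… (B xₖ z)))`. -/
def iterBr {V : Type*} (B : V → V → V) (z : V) : List V → V
  | [] => z
  | x :: l => B x (iterBr B z l)

set_option linter.unusedSectionVars false
set_option maxHeartbeats 1000000

section Aux

variable {𝔤 : Type*} [NormedAddCommGroup 𝔤] [NormedSpace ℝ 𝔤]
variable (br : 𝔤 →ₗ[ℝ] 𝔤 →ₗ[ℝ] 𝔤) (m : ℕ) (π : Fin m → (𝔤 →ₗ[ℝ] 𝔤))

noncomputable def brnL : 𝔤 →ₗ[ℝ] 𝔤 →ₗ[ℝ] 𝔤 :=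
  LinearMap.mk₂ ℝ (fun x y => ∑ i : Fin m, ∑ j : Fin m,
    if h : (i : ℕ) + (j : ℕ) + 1 < m
    then π ⟨(i : ℕ) + (j : ℕ) + 1, h⟩ (br (π i x) (π j y)) else 0)
    (by
      intro x x' y
      rw [← Finset.sum_add_distrib]
      refine Finset.sum_congr rfl fun i _ => ?_
      rw [← Finset.sum_add_distrib]
      refine Finset.sum_congr rfl fun j _ => ?_
      split <;> simp [map_add])
    (by
      intro c x y
      rw [Finset.smul_sum]
      refine Finset.sum_congr rfl fun i _ => ?_
      rw [Finset.smul_sum]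
      refine Finset.sum_congr rfl fun j _ => ?_
      split <;> simp [map_smul])
    (by
      intro x y y'
      rw [← Finset.sum_add_distrib]
      refine Finset.sum_congr rfl fun i _ => ?_
      rw [← Finset.sum_add_distrib]
      refine Finset.sum_congr rfl fun j _ => ?_
      split <;> simp [map_add])
    (by
      intro c x y
      rw [Finset.smul_sum]
      refine Finset.sum_congr rfl fun i _ => ?_
      rw [Finset.smul_sum]
      refine Finset.sum_congr rfl fun j _ => ?_
      split <;> simp [map_smul])

lemma brnL_apply (x y : 𝔤) : brnL br m π x y = ∑ i : Fin m, ∑ j : Fin m,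
    if h : (i : ℕ) + (j : ℕ) + 1 < m
    then π ⟨(i : ℕ) + (j : ℕ) + 1, h⟩ (br (π i x) (π j y)) else 0 := rfl

/-- collapse a sum over `Fin m` of an indicator. -/
lemma collapseL (g : Fin m → 𝔤) (n : ℕ) :
    ∑ s : Fin m, (if (s : ℕ) = n then g s else 0)
      = if h : n < m then g ⟨n, h⟩ else 0 := by
  split
  · next h =>
    rw [Finset.sum_eq_single ⟨n, h⟩]
    · simp
    · intro s _ hs
      rw [if_neg]
      simpa [Fin.ext_iff] using hs
    · simp
  · next h =>
    refine Finset.sum_eq_zero fun s _ => ?_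
    rw [if_neg]
    omega

/-- Lemma A: projection of the graded bracket. -/
lemma pi_brnL (hproj : ∀ (i j : Fin m) (x : 𝔤), π i (π j x) = if i = j then π i x else 0)
    (s : Fin m) (x y : 𝔤) :
    π s (brnL br m π x y) = ∑ i : Fin m, ∑ j : Fin m,
      if (s : ℕ) = (i : ℕ) + (j : ℕ) + 1 then π s (br (π i x) (π j y)) else 0 := by
  rw [brnL_apply, map_sum]
  refine Finset.sum_congr rfl fun i _ => ?_
  rw [map_sum]
  refine Finset.sum_congr rfl fun j _ => ?_
  by_cases h : (i : ℕ) + (j : ℕ) + 1 < m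
  · rw [dif_pos h, hproj]
    by_cases hs : (s : ℕ) = (i : ℕ) + (j : ℕ) + 1
    · rw [if_pos (by simpa [Fin.ext_iff] using hs), if_pos hs]
    · rw [if_neg (by simpa [Fin.ext_iff] using hs), if_neg hs]
  · rw [dif_neg h, map_zero, if_neg (by omega)]

/-- Lemma B: replace a full element by its top relevant component. -/
lemma pi_br_pi (hsum : ∀ x : 𝔤, ∑ i, π i x = x)
    (hgrade : ∀ (i j s : Fin m) (x y : 𝔤),
      (i : ℕ) + (j : ℕ) + 1 < (s : ℕ) → π s (br (π i x) (π j y)) = 0)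
    (s i t : Fin m) (a b : 𝔤)
    (hst : (s : ℕ) = (i : ℕ) + (t : ℕ) + 1)
    (hb : ∀ u : Fin m, (t : ℕ) < (u : ℕ) → π u b = 0) :
    π s (br (π i a) b) = π s (br (π i a) (π t b)) := by
  conv_lhs => rw [← hsum b, map_sum, map_sum]
  rw [Finset.sum_eq_single t]
  · intro u _ hu
    rcases lt_or_gt_of_ne (fun h : (u : ℕ) = (t : ℕ) => hu (Fin.ext h)) with h | h
    · exact hgrade i u s a b (by omega)
    · rw [hb u h]; simp
  · simp


lemma brnL_nested_right
    (hproj : ∀ (i j : Fin m) (x : 𝔤), π i (π j x) = if i = j then π i x else 0)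
    (hsum : ∀ x : 𝔤, ∑ i, π i x = x)
    (hgrade : ∀ (i j s : Fin m) (x y : 𝔤),
      (i : ℕ) + (j : ℕ) + 1 < (s : ℕ) → π s (br (π i x) (π j y)) = 0)
    (x y z : 𝔤) :
    brnL br m π x (brnL br m π y z) = ∑ i : Fin m, ∑ j : Fin m, ∑ k : Fin m,
      if h : (i : ℕ) + (j : ℕ) + (k : ℕ) + 2 < m
      then π ⟨(i : ℕ) + (j : ℕ) + (k : ℕ) + 2, h⟩ (br (π i x) (br (π j y) (π k z)))
      else 0 := by
  rw [brnL_apply]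
  refine Finset.sum_congr rfl fun i _ => ?_
  calc
    ∑ a : Fin m, (if h : (i : ℕ) + (a : ℕ) + 1 < m
        then π ⟨(i : ℕ) + (a : ℕ) + 1, h⟩ (br (π i x) (π a (brnL br m π y z))) else 0)
      = ∑ a : Fin m, ∑ j : Fin m, ∑ k : Fin m,
          (if (a : ℕ) = (j : ℕ) + (k : ℕ) + 1 then
            (if h : (i : ℕ) + (a : ℕ) + 1 < m
              then π ⟨(i : ℕ) + (a : ℕ) + 1, h⟩
                (br (π i x) (π a (br (π j y) (π k z)))) else 0) else 0) := by
        refine Finset.sum_congr rfl fun a _ => ?_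
        by_cases h : (i : ℕ) + (a : ℕ) + 1 < m
        · rw [dif_pos h, pi_brnL br m π hproj a y z, map_sum, map_sum]
          refine Finset.sum_congr rfl fun j _ => ?_
          rw [map_sum, map_sum]
          refine Finset.sum_congr rfl fun k _ => ?_
          split <;> first | rfl | simp
        · rw [dif_neg h]
          symm
          refine Finset.sum_eq_zero fun j _ => Finset.sum_eq_zero fun k _ => ?_
          split <;> first | rfl | simp
    _ = ∑ j : Fin m, ∑ k : Fin m, ∑ a : Fin m,
          (if (a : ℕ) = (j : ℕ) + (k : ℕ) + 1 then
            (if h : (i : ℕ) + (a : ℕ) + 1 < m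
              then π ⟨(i : ℕ) + (a : ℕ) + 1, h⟩
                (br (π i x) (π a (br (π j y) (π k z)))) else 0) else 0) := by
        rw [Finset.sum_comm]
        refine Finset.sum_congr rfl fun j _ => ?_
        rw [Finset.sum_comm]
    _ = ∑ j : Fin m, ∑ k : Fin m,
          (if h : (i : ℕ) + (j : ℕ) + (k : ℕ) + 2 < m
            then π ⟨(i : ℕ) + (j : ℕ) + (k : ℕ) + 2, h⟩
              (br (π i x) (br (π j y) (π k z))) else 0) := by
        refine Finset.sum_congr rfl fun j _ => Finset.sum_congr rfl fun k _ => ?_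
        rw [collapseL]
        by_cases h2 : (i : ℕ) + (j : ℕ) + (k : ℕ) + 2 < m
        · have h1 : (j : ℕ) + (k : ℕ) + 1 < m := by omega
          rw [dif_pos h1]
          simp only [Fin.val_mk]
          simp only [show (i : ℕ) + ((j : ℕ) + (k : ℕ) + 1) + 1
              = (i : ℕ) + (j : ℕ) + (k : ℕ) + 2 from by omega]
          rw [dif_pos h2, dif_pos h2]
          exact (pi_br_pi br m π hsum hgrade ⟨_, h2⟩ i ⟨_, h1⟩ x
            (br (π j y) (π k z)) (by simp only [Fin.val_mk]; omega)
            (fun u hu => hgrade j k u y z (by simp only [Fin.val_mk] at hu; omega))).symm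
        · rw [dif_neg h2]
          by_cases h1 : (j : ℕ) + (k : ℕ) + 1 < m
          · rw [dif_pos h1]
            simp only [Fin.val_mk]
            simp only [show (i : ℕ) + ((j : ℕ) + (k : ℕ) + 1) + 1
                = (i : ℕ) + (j : ℕ) + (k : ℕ) + 2 from by omega]
            rw [dif_neg h2]
          · rw [dif_neg h1]

lemma br_anti (hbr_alt : ∀ x : 𝔤, br x x = 0) (c d : 𝔤) : br c d = - br d c := by
  have h := hbr_alt (c + d)
  simp only [map_add, LinearMap.add_apply, hbr_alt, zero_add, add_zero] at h
  exact eq_neg_of_add_eq_zero_right h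

lemma brnL_anti (hbr_alt : ∀ x : 𝔤, br x x = 0) (c d : 𝔤) :
    brnL br m π c d = - brnL br m π d c := by
  rw [brnL_apply, brnL_apply]
  calc
    ∑ i : Fin m, ∑ j : Fin m, (if h : (i : ℕ) + (j : ℕ) + 1 < m
        then π ⟨(i : ℕ) + (j : ℕ) + 1, h⟩ (br (π i c) (π j d)) else 0)
      = ∑ i : Fin m, ∑ j : Fin m, -(if h : (j : ℕ) + (i : ℕ) + 1 < m
          then π ⟨(j : ℕ) + (i : ℕ) + 1, h⟩ (br (π j d) (π i c)) else 0) := by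
        refine Finset.sum_congr rfl fun i _ => Finset.sum_congr rfl fun j _ => ?_
        simp only [show (j : ℕ) + (i : ℕ) + 1 = (i : ℕ) + (j : ℕ) + 1 from by omega]
        by_cases h : (i : ℕ) + (j : ℕ) + 1 < m
        · rw [dif_pos h, dif_pos h, br_anti br hbr_alt (π i c) (π j d)]
          simp
        · rw [dif_neg h, dif_neg h, neg_zero]
    _ = -∑ i : Fin m, ∑ j : Fin m, (if h : (j : ℕ) + (i : ℕ) + 1 < m
          then π ⟨(j : ℕ) + (i : ℕ) + 1, h⟩ (br (π j d) (π i c)) else 0) := by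
        simp
    _ = -∑ j : Fin m, ∑ i : Fin m, (if h : (j : ℕ) + (i : ℕ) + 1 < m
          then π ⟨(j : ℕ) + (i : ℕ) + 1, h⟩ (br (π j d) (π i c)) else 0) := by
        rw [Finset.sum_comm]

lemma brnL_self (hbr_alt : ∀ x : 𝔤, br x x = 0) (x : 𝔤) : brnL br m π x x = 0 := by
  have h := brnL_anti br m π hbr_alt x x
  have h2 : brnL br m π x x + brnL br m π x x = 0 := by
    nth_rewrite 2 [h]
    simp
  have h3 : (2 : ℝ) • brnL br m π x x = 0 := by rw [two_smul]; exact h2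
  exact (smul_eq_zero.mp h3).resolve_left (by norm_num)

lemma nil_aux
    (hproj : ∀ (i j : Fin m) (x : 𝔤), π i (π j x) = if i = j then π i x else 0)
    (l : List 𝔤) : ∀ (z : 𝔤) (s : Fin m), (s : ℕ) + 1 < 1 + l.length →
      π s (iterBr (fun a b => brnL br m π a b) z l) = 0 := by
  induction l with
  | nil => intro z s h; simp at h
  | cons x l ih =>
    intro z s hs
    show π s (brnL br m π x (iterBr (fun a b => brnL br m π a b) z l)) = 0
    rw [pi_brnL br m π hproj]
    refine Finset.sum_eq_zero fun i _ => Finset.sum_eq_zero fun j _ => ?_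
    split
    · next hcond =>
      by_cases hj : (j : ℕ) + 1 < 1 + l.length
      · rw [ih z j hj]
        simp
      · exfalso
        simp only [List.length_cons] at hs
        omega
    · rfl

lemma pi_delta
    (hproj : ∀ (i j : Fin m) (x : 𝔤), π i (π j x) = if i = j then π i x else 0)
    (δ : ℝ → 𝔤 → 𝔤)
    (hδ : ∀ (ε : ℝ) (x : 𝔤), δ ε x = ∑ i : Fin m, ε ^ ((i : ℕ) + 1) • π i x)
    (ε : ℝ) (i : Fin m) (x : 𝔤) :
    π i (δ ε x) = ε ^ ((i : ℕ) + 1) • π i x := by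
  rw [hδ, map_sum]
  have h : ∀ k : Fin m, π i (ε ^ ((k : ℕ) + 1) • π k x)
      = if i = k then ε ^ ((k : ℕ) + 1) • π i x else 0 := by
    intro k
    rw [map_smul, hproj]
    split <;> simp
  rw [Finset.sum_congr rfl fun k _ => h k, Finset.sum_ite_eq]
  simp

lemma delta_brnL
    (hproj : ∀ (i j : Fin m) (x : 𝔤), π i (π j x) = if i = j then π i x else 0)
    (δ : ℝ → 𝔤 → 𝔤)
    (hδ : ∀ (ε : ℝ) (x : 𝔤), δ ε x = ∑ i : Fin m, ε ^ ((i : ℕ) + 1) • π i x)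
    (ε : ℝ) (x y : 𝔤) :
    δ ε (brnL br m π x y) = brnL br m π (δ ε x) (δ ε y) := by
  rw [hδ]
  calc
    ∑ s : Fin m, ε ^ ((s : ℕ) + 1) • π s (brnL br m π x y)
      = ∑ s : Fin m, ∑ i : Fin m, ∑ j : Fin m,
          (if (s : ℕ) = (i : ℕ) + (j : ℕ) + 1
            then ε ^ ((s : ℕ) + 1) • π s (br (π i x) (π j y)) else 0) := by
        refine Finset.sum_congr rfl fun s _ => ?_
        rw [pi_brnL br m π hproj, Finset.smul_sum]
        refine Finset.sum_congr rfl fun i _ => ?_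
        rw [Finset.smul_sum]
        refine Finset.sum_congr rfl fun j _ => ?_
        split <;> simp
    _ = ∑ i : Fin m, ∑ j : Fin m, ∑ s : Fin m,
          (if (s : ℕ) = (i : ℕ) + (j : ℕ) + 1
            then ε ^ ((s : ℕ) + 1) • π s (br (π i x) (π j y)) else 0) := by
        rw [Finset.sum_comm]
        refine Finset.sum_congr rfl fun i _ => ?_
        rw [Finset.sum_comm]
    _ = brnL br m π (δ ε x) (δ ε y) := by
        rw [brnL_apply]
        refine Finset.sum_congr rfl fun i _ => Finset.sum_congr rfl fun j _ => ?_
        rw [collapseL]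
        rw [pi_delta m π hproj δ hδ ε i x, pi_delta m π hproj δ hδ ε j y]
        by_cases h : (i : ℕ) + (j : ℕ) + 1 < m
        · rw [dif_pos h, dif_pos h]
          simp only [Fin.val_mk, map_smul, LinearMap.smul_apply, smul_smul]
          congr 1
          rw [← pow_add]
          congr 1
          omega
        · rw [dif_neg h, dif_neg h]

lemma delta_expand
    (hgrade : ∀ (i j s : Fin m) (x y : 𝔤),
      (i : ℕ) + (j : ℕ) + 1 < (s : ℕ) → π s (br (π i x) (π j y)) = 0)
    (δ : ℝ → 𝔤 → 𝔤)
    (hδ : ∀ (ε : ℝ) (x : 𝔤), δ ε x = ∑ i : Fin m, ε ^ ((i : ℕ) + 1) • π i x)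
    (x y : 𝔤) (ε : ℝ) (hε : ε ≠ 0) :
    δ ε⁻¹ (br (δ ε x) (δ ε y)) = ∑ s : Fin m, ∑ i : Fin m, ∑ j : Fin m,
      ε ^ ((i : ℕ) + (j : ℕ) + 1 - (s : ℕ)) • π s (br (π i x) (π j y)) := by
  rw [hδ ε⁻¹]
  refine Finset.sum_congr rfl fun s _ => ?_
  rw [hδ ε x, hδ ε y]
  simp only [map_sum, map_smul, LinearMap.sum_apply, LinearMap.smul_apply,
    Finset.smul_sum, smul_smul]
  rw [Finset.sum_comm]
  refine Finset.sum_congr rfl fun i _ => Finset.sum_congr rfl fun j _ => ?_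
  rcases le_or_gt (s : ℕ) ((i : ℕ) + (j : ℕ) + 1) with hle | hgt
  · congr 1
    field_simp
    have hexp : ((i : ℕ) + 1) + ((j : ℕ) + 1) = ((i : ℕ) + (j : ℕ) + 1 - (s : ℕ)) + ((s : ℕ) + 1) := by
      omega
    rw [one_div, inv_pow, mul_assoc, ← pow_add, add_comm ((j : ℕ) + 1), hexp, pow_add]
    field_simp
    ring
  · rw [hgrade i j s x y hgt]
    simp

end Aux

/-- For a finite-dimensional real Lie algebra `(𝔤, br)` graded by projections `π i` onto
`W_{i+1}` with `[V^i, V^j] ⊆ V^{i+j}`, and dilatations `δ_ε x = Σ_i ε^i (π i x)`: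
the limit `[x,y]ₙ = lim_{ε→0⁺} δ_ε⁻¹ [δ_ε x, δ_ε y]` exists, is given by the explicit
graded formula, is a Lie bracket (bilinear, alternating, Jacobi), each `δ_ε` is an
automorphism of it, and the resulting Lie algebra is nilpotent. -/
theorem stmt_5 {𝔤 : Type*} [NormedAddCommGroup 𝔤] [NormedSpace ℝ 𝔤] [FiniteDimensional ℝ 𝔤]
    (br : 𝔤 →ₗ[ℝ] 𝔤 →ₗ[ℝ] 𝔤)
    (hbr_alt : ∀ x : 𝔤, br x x = 0)
    (hbr_jac : ∀ x y z : 𝔤, br x (br y z) = br (br x y) z + br y (br x z))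
    (m : ℕ) (hm : 1 ≤ m) (π : Fin m → (𝔤 →ₗ[ℝ] 𝔤))
    (hsum : ∀ x : 𝔤, ∑ i, π i x = x)
    (hproj : ∀ (i j : Fin m) (x : 𝔤), π i (π j x) = if i = j then π i x else 0)
    (hgrade : ∀ (i j s : Fin m) (x y : 𝔤),
      (i : ℕ) + (j : ℕ) + 1 < (s : ℕ) → π s (br (π i x) (π j y)) = 0)
    (δ : ℝ → 𝔤 → 𝔤)
    (hδ : ∀ (ε : ℝ) (x : 𝔤), δ ε x = ∑ i : Fin m, ε ^ ((i : ℕ) + 1) • π i x) :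
    ∃ brn : 𝔤 →ₗ[ℝ] 𝔤 →ₗ[ℝ] 𝔤,
      (∀ x y : 𝔤, Filter.Tendsto (fun ε : ℝ => δ ε⁻¹ (br (δ ε x) (δ ε y)))
        (𝓝[>] (0 : ℝ)) (𝓝 (brn x y))) ∧
      (∀ x y : 𝔤, brn x y = ∑ i : Fin m, ∑ j : Fin m,
        if h : (i : ℕ) + (j : ℕ) + 1 < m
        then π ⟨(i : ℕ) + (j : ℕ) + 1, h⟩ (br (π i x) (π j y)) else 0) ∧
      (∀ x : 𝔤, brn x x = 0) ∧
      (∀ x y z : 𝔤, brn x (brn y z) = brn (brn x y) z + brn y (brn x z)) ∧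
      (∀ ε : ℝ, 0 < ε → ∀ x y : 𝔤, δ ε (brn x y) = brn (δ ε x) (δ ε y)) ∧
      (∀ l : List 𝔤, m ≤ l.length → ∀ z : 𝔤, iterBr (fun a b => brn a b) z l = 0) := by
  classical
  refine ⟨brnL br m π, ?_, fun x y => brnL_apply br m π x y,
    fun x => brnL_self br m π hbr_alt x, ?_, fun ε _ x y => delta_brnL br m π hproj δ hδ ε x y, ?_⟩
  · -- the limit
    intro x y
    have hE : ∀ᶠ ε in 𝓝[>] (0 : ℝ),
        (∑ s : Fin m, ∑ i : Fin m, ∑ j : Fin m,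
          ε ^ ((i : ℕ) + (j : ℕ) + 1 - (s : ℕ)) • π s (br (π i x) (π j y)))
          = δ ε⁻¹ (br (δ ε x) (δ ε y)) :=
      eventually_mem_nhdsWithin.mono fun ε hε =>
        (delta_expand br m π hgrade δ hδ x y ε (ne_of_gt hε)).symm
    refine Tendsto.congr' hE ?_
    have hlim : Filter.Tendsto (fun ε : ℝ => ∑ s : Fin m, ∑ i : Fin m, ∑ j : Fin m,
        ε ^ ((i : ℕ) + (j : ℕ) + 1 - (s : ℕ)) • π s (br (π i x) (π j y)))
        (𝓝[>] (0 : ℝ)) (𝓝 (∑ s : Fin m, ∑ i : Fin m, ∑ j : Fin m,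
          (0 : ℝ) ^ ((i : ℕ) + (j : ℕ) + 1 - (s : ℕ)) • π s (br (π i x) (π j y)))) := by
      refine tendsto_finset_sum _ fun s _ => tendsto_finset_sum _ fun i _ =>
        tendsto_finset_sum _ fun j _ => ?_
      exact (((continuous_pow _).tendsto 0).mono_left nhdsWithin_le_nhds).smul_const _
    have hLeq : brnL br m π x y = ∑ s : Fin m, ∑ i : Fin m, ∑ j : Fin m,
        (0 : ℝ) ^ ((i : ℕ) + (j : ℕ) + 1 - (s : ℕ)) • π s (br (π i x) (π j y)) := by
      rw [brnL_apply]
      calc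
        ∑ i : Fin m, ∑ j : Fin m, (if h : (i : ℕ) + (j : ℕ) + 1 < m
            then π ⟨(i : ℕ) + (j : ℕ) + 1, h⟩ (br (π i x) (π j y)) else 0)
          = ∑ i : Fin m, ∑ j : Fin m, ∑ s : Fin m,
              (if (s : ℕ) = (i : ℕ) + (j : ℕ) + 1 then π s (br (π i x) (π j y)) else 0) := by
            refine Finset.sum_congr rfl fun i _ => Finset.sum_congr rfl fun j _ => ?_
            rw [collapseL]
        _ = ∑ i : Fin m, ∑ j : Fin m, ∑ s : Fin m,
              (0 : ℝ) ^ ((i : ℕ) + (j : ℕ) + 1 - (s : ℕ)) • π s (br (π i x) (π j y)) := by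
            refine Finset.sum_congr rfl fun i _ => Finset.sum_congr rfl fun j _ =>
              Finset.sum_congr rfl fun s _ => ?_
            rw [zero_pow_eq, ite_smul, one_smul, zero_smul]
            rcases lt_trichotomy ((s : ℕ)) ((i : ℕ) + (j : ℕ) + 1) with h | h | h
            · rw [if_neg (by omega), if_neg (by omega)]
            · rw [if_pos h, if_pos (by omega)]
            · rw [if_neg (by omega), if_pos (by omega), hgrade i j s x y h]
        _ = ∑ s : Fin m, ∑ i : Fin m, ∑ j : Fin m,
              (0 : ℝ) ^ ((i : ℕ) + (j : ℕ) + 1 - (s : ℕ)) • π s (br (π i x) (π j y)) :=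
            (Finset.sum_congr rfl fun i _ => Finset.sum_comm).trans Finset.sum_comm
    rw [hLeq]
    exact hlim
  · -- Jacobi
    intro x y z
    rw [show brnL br m π (brnL br m π x y) z = -(brnL br m π z (brnL br m π x y)) from
      brnL_anti br m π hbr_alt _ _]
    rw [brnL_nested_right br m π hproj hsum hgrade x y z,
      brnL_nested_right br m π hproj hsum hgrade z x y,
      brnL_nested_right br m π hproj hsum hgrade y x z]
    rw [show (∑ a : Fin m, ∑ b : Fin m, ∑ c : Fin m,
        if h : (a : ℕ) + (b : ℕ) + (c : ℕ) + 2 < m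
        then π ⟨(a : ℕ) + (b : ℕ) + (c : ℕ) + 2, h⟩ (br (π a z) (br (π b x) (π c y)))
        else 0)
      = ∑ b : Fin m, ∑ c : Fin m, ∑ a : Fin m,
        if h : (a : ℕ) + (b : ℕ) + (c : ℕ) + 2 < m
        then π ⟨(a : ℕ) + (b : ℕ) + (c : ℕ) + 2, h⟩ (br (π a z) (br (π b x) (π c y)))
        else 0 from by
        rw [Finset.sum_comm]
        exact Finset.sum_congr rfl fun b _ => Finset.sum_comm]
    rw [show (∑ a : Fin m, ∑ b : Fin m, ∑ c : Fin m,
        if h : (a : ℕ) + (b : ℕ) + (c : ℕ) + 2 < m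
        then π ⟨(a : ℕ) + (b : ℕ) + (c : ℕ) + 2, h⟩ (br (π a y) (br (π b x) (π c z)))
        else 0)
      = ∑ b : Fin m, ∑ a : Fin m, ∑ c : Fin m,
        if h : (a : ℕ) + (b : ℕ) + (c : ℕ) + 2 < m
        then π ⟨(a : ℕ) + (b : ℕ) + (c : ℕ) + 2, h⟩ (br (π a y) (br (π b x) (π c z)))
        else 0 from Finset.sum_comm]
    rw [← Finset.sum_neg_distrib, ← Finset.sum_add_distrib]
    refine Finset.sum_congr rfl fun i _ => ?_
    rw [← Finset.sum_neg_distrib, ← Finset.sum_add_distrib]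
    refine Finset.sum_congr rfl fun j _ => ?_
    rw [← Finset.sum_neg_distrib, ← Finset.sum_add_distrib]
    refine Finset.sum_congr rfl fun k _ => ?_
    simp only [show (k : ℕ) + (i : ℕ) + (j : ℕ) + 2 = (i : ℕ) + (j : ℕ) + (k : ℕ) + 2
        from by omega,
      show (j : ℕ) + (i : ℕ) + (k : ℕ) + 2 = (i : ℕ) + (j : ℕ) + (k : ℕ) + 2 from by omega]
    by_cases h : (i : ℕ) + (j : ℕ) + (k : ℕ) + 2 < m
    · rw [dif_pos h, dif_pos h, dif_pos h]
      rw [hbr_jac (π i x) (π j y) (π k z),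
        br_anti br hbr_alt (br (π i x) (π j y)) (π k z)]
      simp [map_add]
    · rw [dif_neg h, dif_neg h, dif_neg h]
      simp
  · -- nilpotency
    intro l hl z
    have h0 : ∀ s : Fin m, π s (iterBr (fun a b => brnL br m π a b) z l) = 0 := by
      intro s
      refine nil_aux br m π hproj l z s ?_
      have := s.isLt
      omega
    have := hsum (iterBr (fun a b => brnL br m π a b) z l)
    rw [← this]
    exact Finset.sum_eq_zero fun s _ => h0 s
end

section
/- Let G be a topological group with dilatations δ_ε (ε > 0) satisfying hypotheses (H0), (H1), (H2), with limit operation β. Define on G × G the operation (x,u)·(y,v) = (xy, y^{-1}uyv) and the dilatations δ_ε^{(2)}(x,u) = (δ_ε x, δ_ε u). Then: (a) G × G with this operation is a group, with identity (e,e), and the map op : G × G → G, op(x,u) = xu, is a group homomorphism; (b) for all (x,u), (y,v) ∈ G × G, lim_{ε→0⁺} δ_ε^{-1}( op(x,u)^{-1} · op( (x,u)·δ_ε^{(2)}(y,v) ) ) = β(y,v); that is, the group operation of G is derivable at every point and its derivative at (x,u) applied to (y,v) equals β(y,v). -/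
open Filter Topology

/-- The operation `(x,u)(y,v) = (xy, y⁻¹uyv)` of the double `G⁽²⁾ = G × G`. -/
def mul2 {G : Type*} [Group G] (p q : G × G) : G × G :=
  (p.1 * q.1, q.1⁻¹ * p.2 * q.1 * q.2)

/-- The operation map `op(x,u) = xu` of a group, seen on the double `G⁽²⁾`. -/
def op2 {G : Type*} [Group G] (p : G × G) : G :=
  p.1 * p.2

/-- For a uniform group `G` with dilatations satisfying H0, H1, H2 (limit operation `β`):
the double `G⁽²⁾ = G × G` with `(x,u)(y,v) = (xy, y⁻¹uyv)` is a group, `op(x,u) = xu` is a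
group homomorphism, and `op` is derivable with derivative
`D op(x,u)(y,v) = β(y,v)`. -/
theorem stmt_8 {G : Type*} [Group G] [UniformSpace G] [IsUniformGroup G]
    (δ : ℝ → G → G)
    (hδcont : ∀ ε : ℝ, 0 < ε → Continuous (δ ε))
    (hδbij : ∀ ε : ℝ, 0 < ε → Function.Bijective (δ ε))
    (hδone : δ 1 = id)
    (hδcomp : ∀ ε μ : ℝ, 0 < ε → 0 < μ → ∀ x, δ ε (δ μ x) = δ (ε * μ) x)
    (β : G → G → G)
    (H0 : ∀ K : Set G, IsCompact K →
      TendstoUniformlyOn (fun (ε : ℝ) (x : G) => δ ε x) (fun _ => (1 : G))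
        (𝓝[>] (0 : ℝ)) K)
    (H1 : ∀ K : Set (G × G), IsCompact K →
      TendstoUniformlyOn (fun (ε : ℝ) (p : G × G) => δ ε⁻¹ (δ ε p.1 * δ ε p.2))
        (fun p => β p.1 p.2) (𝓝[>] (0 : ℝ)) K)
    (H2 : ∀ K : Set G, IsCompact K →
      TendstoUniformlyOn (fun (ε : ℝ) (x : G) => δ ε⁻¹ ((δ ε x)⁻¹)) (fun x => x⁻¹)
        (𝓝[>] (0 : ℝ)) K) :
    (∀ p q r : G × G, mul2 (mul2 p q) r = mul2 p (mul2 q r)) ∧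
    (∀ p : G × G, mul2 p (1, 1) = p ∧ mul2 (1, 1) p = p) ∧
    (∀ p : G × G, ∃ q : G × G, mul2 p q = (1, 1) ∧ mul2 q p = (1, 1)) ∧
    (∀ p q : G × G, op2 (mul2 p q) = op2 p * op2 q) ∧
    (∀ x u y v : G,
      Filter.Tendsto
        (fun ε : ℝ => δ ε⁻¹ ((op2 (x, u))⁻¹ * op2 (mul2 (x, u) (δ ε y, δ ε v))))
        (𝓝[>] (0 : ℝ)) (𝓝 (β y v))) := by
  refine ⟨?_, ?_, ?_, ?_, ?_⟩
  · intro p q r; simp only [mul2]; ext <;> simp <;> group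
  · intro p; constructor <;> · simp only [mul2]; ext <;> simp
  · intro p
    exact ⟨(p.1⁻¹, p.1 * p.2⁻¹ * p.1⁻¹), by simp only [mul2]; ext <;> simp <;> group,
      by simp only [mul2]; ext <;> simp <;> group⟩
  · intro p q; simp only [mul2, op2]; group
  · intro x u y v
    have h := (H1 {(y, v)} isCompact_singleton).tendsto_at (Set.mem_singleton _)
    simp only at h
    convert h using 2 with ε
    simp only [op2, mul2]
    group
end

section
/- Let ω be the standard symplectic form on ℝ^{2n}. Let f : ℝ → ℝ^{2n} be differentiable, f̄ : ℝ → ℝ, and a' : ℝ → ℝ, and assume that for every compact interval K ⊆ ℝ, the quantity f̄(t+s) − f̄(t) − ½ω(f(t), f(t+s)) − s·a'(t) is o(s²) as s → 0, uniformly for t ∈ K. Then f̄ is differentiable, with f̄'(t) = a'(t) + ½ω(f(t), f'(t)) for every t, and the function a' is constant on ℝ. -/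
open Filter Topology

/-- `ℝ^{2n}`, as a Euclidean space. -/
abbrev Esp (n : ℕ) := EuclideanSpace ℝ (Fin (2 * n))

/-- The standard complex structure `J` on `ℝ^{2n}`. -/
noncomputable def stdJ (n : ℕ) (x : Esp n) : Esp n :=
  WithLp.toLp 2 fun i => if h : (i : ℕ) < n then -x ⟨(i : ℕ) + n, by omega⟩
    else x ⟨(i : ℕ) - n, by have := i.isLt; omega⟩

/-- The standard symplectic form `ω(x,y) = ⟨Jx, y⟩` on `ℝ^{2n}`. -/
noncomputable def stdOmega (n : ℕ) (x y : Esp n) : ℝ :=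
  inner ℝ (stdJ n x) y

/-- Multiplication in the Heisenberg group `H(n) = ℝ^{2n} × ℝ`. -/
noncomputable def Hmul (n : ℕ) (p q : Esp n × ℝ) : Esp n × ℝ :=
  (p.1 + q.1, p.2 + q.2 + (1 / 2) * stdOmega n p.1 q.1)

/-- Inverse in the Heisenberg group. -/
noncomputable def Hinv (n : ℕ) (p : Esp n × ℝ) : Esp n × ℝ :=
  (-p.1, -p.2)

/-- The dilatations `δ_ε(x, x̄) = (εx, ε²x̄)` of the Heisenberg group. -/
noncomputable def Hdil (n : ℕ) (ε : ℝ) (p : Esp n × ℝ) : Esp n × ℝ :=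
  (ε • p.1, ε ^ 2 * p.2)


section Aux

lemma stdJ_apply_lt (n : ℕ) (x : Esp n) (i : Fin (2*n)) (h : (i:ℕ) < n) :
    stdJ n x i = -x ⟨(i : ℕ) + n, by omega⟩ := by simp [stdJ, h]

lemma stdJ_apply_ge (n : ℕ) (x : Esp n) (i : Fin (2*n)) (h : ¬ (i:ℕ) < n) :
    stdJ n x i = x ⟨(i : ℕ) - n, by have := i.isLt; omega⟩ := by simp [stdJ, h]

lemma stdJ_mul_pair (n : ℕ) (x y : Esp n) (a b : Fin (2*n)) (h : (a:ℕ) < n)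
    (hb : (b:ℕ) = (a:ℕ) + n) :
    stdJ n x a * y a + stdJ n y a * x a + (stdJ n x b * y b + stdJ n y b * x b) = 0 := by
  have hb' : ¬ (b:ℕ) < n := by omega
  have ea : (⟨(b:ℕ) - n, by have := b.isLt; omega⟩ : Fin (2*n)) = a :=
    Fin.ext (by simp [hb])
  have eb : (⟨(a:ℕ) + n, by omega⟩ : Fin (2*n)) = b := Fin.ext (by simp [hb])
  rw [stdJ_apply_lt _ x a h, stdJ_apply_lt _ y a h, stdJ_apply_ge _ x b hb',
    stdJ_apply_ge _ y b hb', ea, eb]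
  ring

lemma stdOmega_skew (n : ℕ) (x y : Esp n) : stdOmega n x y = - stdOmega n y x := by
  have h : stdOmega n x y + stdOmega n y x = 0 := by
    unfold stdOmega
    simp only [PiLp.inner_apply, RCLike.inner_apply, conj_trivial,
      ← Finset.sum_add_distrib]
    refine Finset.sum_involution
      (fun a _ => if h : (a : ℕ) < n then ⟨(a:ℕ) + n, by omega⟩
        else ⟨(a:ℕ) - n, by have := a.isLt; omega⟩) ?_ ?_ (fun a ha => Finset.mem_univ _) ?_
    · intro a _
      by_cases h : (a : ℕ) < n
      · rw [dif_pos h]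
        linarith [stdJ_mul_pair n x y a ⟨(a:ℕ) + n, by omega⟩ h rfl]
      · rw [dif_neg h, add_comm]
        linarith [stdJ_mul_pair n x y ⟨(a:ℕ) - n, by have := a.isLt; omega⟩ a
          (by show (a:ℕ) - n < n; have := a.isLt; omega)
          (by show (a:ℕ) = (a:ℕ) - n + n; have := a.isLt; omega)]
    · intro a _ _
      split_ifs with h <;>
        (simp only [ne_eq, Fin.ext_iff, Fin.val_mk]; have := a.isLt; omega)
    · intro a _
      split_ifs with h h2 h3 <;>
        first
          | (simp only [Fin.ext_iff, Fin.val_mk]; have := a.isLt; omega)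
          | (exfalso; simp only [Fin.val_mk] at *; have := a.isLt; omega)
  linarith

lemma stdOmega_self (n : ℕ) (x : Esp n) : stdOmega n x x = 0 := by
  have := stdOmega_skew n x x; linarith


lemma stdOmega_hasDerivAt (n : ℕ) (f f' : ℝ → Esp n) (hf : ∀ t, HasDerivAt f (f' t) t)
    (x : Esp n) (u : ℝ) :
    HasDerivAt (fun v => stdOmega n x (f v)) (stdOmega n x (f' u)) u := by
  have h := ((innerSL ℝ (stdJ n x)).hasFDerivAt).comp_hasDerivAt u (hf u)
  exact h

lemma key_deriv (n : ℕ) (f f' : ℝ → Esp n) (fbar a' : ℝ → ℝ)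
    (hf : ∀ t, HasDerivAt f (f' t) t)
    (ho : ∀ K : Set ℝ, IsCompact K → ∀ c : ℝ, 0 < c → ∃ η > 0, ∀ s : ℝ, |s| ≤ η →
      ∀ t ∈ K,
        |fbar (t + s) - fbar t - (1 / 2) * stdOmega n (f t) (f (t + s)) - s * a' t| ≤
          c * s ^ 2) (t : ℝ) :
    HasDerivAt fbar (a' t + (1 / 2) * stdOmega n (f t) (f' t)) t := by
  obtain ⟨η, hη, hb⟩ := ho (Set.Icc (t-1) (t+1)) isCompact_Icc 1 one_pos
  set φ : ℝ → ℝ := fun u => fbar u - fbar t - (1/2) * stdOmega n (f t) (f u) - (u - t) * a' t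
    with hφdef
  have hφt : φ t = 0 := by simp [hφdef, stdOmega_self]
  have hφb : ∀ u : ℝ, |u - t| ≤ η → |φ u| ≤ (u - t)^2 := by
    intro u hu
    have := hb (u - t) hu t (by constructor <;> linarith)
    simpa [hφdef, show t + (u - t) = u by ring] using this
  have hφ0 : HasDerivAt φ 0 t := by
    rw [hasDerivAt_iff_isLittleO]
    rw [Asymptotics.isLittleO_iff]
    intro c hc
    have hmem : Metric.ball t (min η c) ∈ 𝓝 t :=
      Metric.ball_mem_nhds t (lt_min hη hc)
    filter_upwards [hmem] with u hu
    rw [Metric.mem_ball, Real.dist_eq] at hu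
    have h1 : |u - t| ≤ η := le_of_lt (lt_of_lt_of_le hu (min_le_left _ _))
    have h2 : |u - t| ≤ c := le_of_lt (lt_of_lt_of_le hu (min_le_right _ _))
    have h3 := hφb u h1
    have h4 : (u - t)^2 = |u - t| * |u - t| := by rw [← sq_abs]; ring
    simp only [hφt, smul_zero, sub_zero, Real.norm_eq_abs]
    calc |φ u| ≤ (u - t)^2 := h3
      _ = |u - t| * |u - t| := h4
      _ ≤ c * |u - t| := by
          apply mul_le_mul_of_nonneg_right h2 (abs_nonneg _)
  have hA : HasDerivAt (fun u : ℝ => (u - t) * a' t) (a' t) t := by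
    simpa using ((hasDerivAt_id t).sub_const t).mul_const (a' t)
  have hB : HasDerivAt (fun u => (1/2) * stdOmega n (f t) (f u))
      ((1/2) * stdOmega n (f t) (f' t)) t :=
    (stdOmega_hasDerivAt n f f' hf (f t) t).const_mul (1/2)
  have hc : HasDerivAt (fun u => fbar t + (u - t) * a' t + (1/2) * stdOmega n (f t) (f u))
      (a' t + (1/2) * stdOmega n (f t) (f' t)) t := (hA.const_add (fbar t)).add hB
  have h3 := hφ0.add hc
  have h4 : (fun u => φ u + (fbar t + (u - t) * a' t + (1/2) * stdOmega n (f t) (f u)))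
      = fbar := by
    funext u; simp only [hφdef]; ring
  change HasDerivAt (fun u => φ u + (fbar t + (u - t) * a' t + (1/2) * stdOmega n (f t) (f u))) _ t at h3
  rw [h4] at h3
  simpa using h3


lemma a_deriv_zero (n : ℕ) (f : ℝ → Esp n) (fbar a' : ℝ → ℝ)
    (ho : ∀ K : Set ℝ, IsCompact K → ∀ c : ℝ, 0 < c → ∃ η > 0, ∀ s : ℝ, |s| ≤ η →
      ∀ t ∈ K,
        |fbar (t + s) - fbar t - (1 / 2) * stdOmega n (f t) (f (t + s)) - s * a' t| ≤
          c * s ^ 2) (t : ℝ) :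
    HasDerivAt a' 0 t := by
  rw [hasDerivAt_iff_isLittleO, Asymptotics.isLittleO_iff]
  intro c hc
  obtain ⟨η, hη, hb⟩ := ho (Set.Icc (t-1) (t+1)) isCompact_Icc (c/2) (by positivity)
  have hmem : Metric.ball t (min (min η 1) 1) ∈ 𝓝 t :=
    Metric.ball_mem_nhds t (lt_min (lt_min hη one_pos) one_pos)
  filter_upwards [hmem] with u hu
  rw [Metric.mem_ball, Real.dist_eq] at hu
  have h1 : |u - t| ≤ η := le_of_lt (lt_of_lt_of_le hu ((min_le_left _ _).trans (min_le_left _ _)))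
  have h1' : |u - t| ≤ 1 := le_of_lt (lt_of_lt_of_le hu ((min_le_left _ _).trans (min_le_right _ _)))
  have hA := hb (u - t) h1 t (by constructor <;> linarith)
  have habs := abs_le.1 h1'
  have hB := hb (t - u) (by rw [abs_sub_comm] at h1; exact h1) u
    (by constructor <;> linarith [habs.1, habs.2])
  rw [show t + (u - t) = u by ring] at hA
  rw [show u + (t - u) = t by ring] at hB
  rw [stdOmega_skew n (f u) (f t)] at hB
  -- now |(u - t) * (a' u - a' t)| ≤ c * (u-t)^2
  have hsum : |(u - t) * (a' u - a' t)| ≤ c * (u - t)^2 := by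
    have e : (u - t) * (a' u - a' t) =
        (fbar u - fbar t - 1 / 2 * stdOmega n (f t) (f u) - (u - t) * a' t) +
        (fbar t - fbar u - 1 / 2 * (- stdOmega n (f t) (f u)) - (t - u) * a' u) := by ring
    rw [e]
    calc _ ≤ _ := abs_add_le _ _
      _ ≤ c/2 * (u-t)^2 + c/2 * (t-u)^2 := add_le_add hA hB
      _ = c * (u-t)^2 := by ring
  simp only [smul_zero, sub_zero, Real.norm_eq_abs]
  rw [abs_mul] at hsum
  rcases eq_or_ne u t with rfl | hne
  · simp
  · have hpos : 0 < |u - t| := abs_pos.2 (sub_ne_zero.2 hne)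
    have h5 : c * (u - t)^2 = |u - t| * (c * |u - t|) := by
      rw [← sq_abs]; ring
    rw [h5] at hsum
    exact le_of_mul_le_mul_left hsum hpos


end Aux

/-- For a curve `t ↦ (f(t), f̄(t))` in the Heisenberg group: if `f` is differentiable with
derivative `f'` and for every compact `K` the quantity
`f̄(t+s) − f̄(t) − ½ω(f(t), f(t+s)) − s·a'(t)` is `o(s²)` as `s → 0`, uniformly in `t ∈ K`,
then `f̄` is differentiable with `f̄'(t) = a'(t) + ½ω(f(t), f'(t))`, and `a'` is constant. -/

theorem stmt_10 (n : ℕ) (f f' : ℝ → Esp n) (fbar a' : ℝ → ℝ)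
    (hf : ∀ t, HasDerivAt f (f' t) t)
    (ho : ∀ K : Set ℝ, IsCompact K → ∀ c : ℝ, 0 < c → ∃ η > 0, ∀ s : ℝ, |s| ≤ η →
      ∀ t ∈ K,
        |fbar (t + s) - fbar t - (1 / 2) * stdOmega n (f t) (f (t + s)) - s * a' t| ≤
          c * s ^ 2) :
    (∀ t, HasDerivAt fbar (a' t + (1 / 2) * stdOmega n (f t) (f' t)) t) ∧
    (∀ t s, a' t = a' s) := by
  refine ⟨fun t => key_deriv n f f' fbar a' hf ho t, fun t s => ?_⟩
  have hd : ∀ x, HasDerivAt a' 0 x := fun x => a_deriv_zero n f fbar a' ho x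
  exact is_const_of_deriv_eq_zero (fun x => (hd x).differentiableAt)
    (fun x => (hd x).deriv) t s
end

section
/- Let ω be the standard symplectic form on ℝ^{2n}. Let φ : ℝ × ℝ^{2n} → ℝ^{2n} and F : ℝ × ℝ^{2n} → ℝ be C² in all variables, and suppose that for all t, x and all y ∈ ℝ^{2n}: (i) ∇_x F(t,x)·y = ½ω(φ(t,x), D_x φ(t,x)y) − ½ω(x, y) (each φ(t,·) lifts to a volume preserving derivable map of the Heisenberg group), and (ii) ∂F/∂t(t,x) = ½ω(φ(t,x), ∂φ/∂t(t,x)) (the lifted flow is horizontal). Then the flow is constant: ∂φ/∂t(t,x) = 0 for all t, x. -/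
open Filter Topology

namespace Aux

noncomputable def Jlm (n : ℕ) : Esp n →ₗ[ℝ] Esp n where
  toFun := stdJ n
  map_add' x y := by
    ext i
    simp only [stdJ, PiLp.add_apply, PiLp.toLp_apply]
    split <;> ring
  map_smul' c x := by
    ext i
    simp only [stdJ, PiLp.toLp_apply, PiLp.smul_apply, RingHom.id_apply, smul_eq_mul]
    split <;> ring

noncomputable def JL (n : ℕ) : Esp n →L[ℝ] Esp n := LinearMap.toContinuousLinearMap (Jlm n)

lemma JL_apply (n : ℕ) (x : Esp n) : JL n x = stdJ n x := rfl

lemma stdJ_zero (n : ℕ) : stdJ n 0 = 0 := by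
  have := (JL n).map_zero
  rwa [JL_apply] at this

lemma stdJ_stdJ (n : ℕ) (x : Esp n) : stdJ n (stdJ n x) = -x := by
  ext i
  simp only [stdJ, PiLp.neg_apply, PiLp.toLp_apply]
  rcases lt_or_ge (i : ℕ) n with h | h
  · rw [dif_pos h, dif_neg (show ¬((i : ℕ) + n < n) by omega)]
    generalize_proofs hpf
    have he : ((i : ℕ) + n - n) = (i : ℕ) := by omega
    rw [(Fin.ext he : (⟨(i : ℕ) + n - n, hpf⟩ : Fin (2 * n)) = i)]
  · have hi := i.isLt
    rw [dif_neg (by omega), dif_pos (show (i : ℕ) - n < n by omega)]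
    generalize_proofs hpf
    have he : ((i : ℕ) - n + n) = (i : ℕ) := by omega
    rw [(Fin.ext he : (⟨(i : ℕ) - n + n, hpf⟩ : Fin (2 * n)) = i)]

lemma inner_stdJ_stdJ (n : ℕ) (x y : Esp n) :
    (inner ℝ (stdJ n x) (stdJ n y) : ℝ) = inner ℝ x y := by
  classical
  simp only [PiLp.inner_apply, RCLike.inner_apply, conj_trivial]
  set σ : Fin (2 * n) → Fin (2 * n) := fun i =>
    if h : (i : ℕ) < n then ⟨(i : ℕ) + n, by omega⟩ else ⟨(i : ℕ) - n, by have := i.isLt; omega⟩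
    with hσ
  have hval : ∀ i : Fin (2 * n), ((σ i : Fin (2 * n)) : ℕ) =
      if (i : ℕ) < n then (i : ℕ) + n else (i : ℕ) - n := by
    intro i
    rw [hσ]
    dsimp only
    split <;> simp [*]
  have hinv : Function.Involutive σ := by
    intro i
    apply Fin.ext
    rcases lt_or_ge (i : ℕ) n with h | h
    · have h1 : ((σ i : Fin (2 * n)) : ℕ) = (i : ℕ) + n := by rw [hval, if_pos h]
      rw [hval (σ i), h1, if_neg (by omega)]
      omega
    · have hi := i.isLt
      have h1 : ((σ i : Fin (2 * n)) : ℕ) = (i : ℕ) - n := by rw [hval, if_neg (not_lt.mpr h)]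
      rw [hval (σ i), h1, if_pos (by omega)]
      omega
  refine Fintype.sum_bijective σ hinv.bijective _ _ ?_
  intro i
  rcases lt_or_ge (i : ℕ) n with h | h
  · have hs : σ i = ⟨(i : ℕ) + n, by omega⟩ := by
      simp only [hσ]
      rw [dif_pos h]
    rw [hs]
    simp only [stdJ, PiLp.toLp_apply, dif_pos h, neg_mul_neg]
  · have hi := i.isLt
    have hs : σ i = ⟨(i : ℕ) - n, by omega⟩ := by
      simp only [hσ]
      rw [dif_neg (not_lt.mpr h)]
    rw [hs]
    simp only [stdJ, PiLp.toLp_apply, dif_neg (not_lt.mpr h)]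

lemma inner_stdJ_skew (n : ℕ) (x y : Esp n) :
    (inner ℝ (stdJ n x) y : ℝ) = -(inner ℝ (stdJ n y) x : ℝ) := by
  have h := inner_stdJ_stdJ n (stdJ n x) y
  rw [stdJ_stdJ, inner_neg_left] at h
  rw [← h, real_inner_comm]

end Aux

open ContinuousLinearMap Aux

/-- A horizontal `C²` flow of lifts of symplectomorphisms of the Heisenberg group is
constant: if (i) each `F(t,·)` is a generating function of `φ(t,·)`
(`∇_xF(t,x)·y = ½ω(φ(t,x), D_xφ(t,x)y) − ½ω(x,y)`, so the lift is volume preserving and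
derivable) and (ii) the lifted flow is horizontal
(`∂F/∂t(t,x) = ½ω(φ(t,x), ∂φ/∂t(t,x))`), then `∂φ/∂t = 0`. -/
theorem stmt_13 (n : ℕ)
    (φ : ℝ × Esp n → Esp n) (F : ℝ × Esp n → ℝ)
    (hφ : ContDiff ℝ 2 φ) (hF : ContDiff ℝ 2 F)
    (hi : ∀ (t : ℝ) (x y : Esp n),
      (inner ℝ (gradient (fun z => F (t, z)) x) y : ℝ) =
        (1 / 2) * stdOmega n (φ (t, x)) (fderiv ℝ (fun z => φ (t, z)) x y)
          - (1 / 2) * stdOmega n x y)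
    (hii : ∀ (t : ℝ) (x : Esp n),
      deriv (fun s => F (s, x)) t =
        (1 / 2) * stdOmega n (φ (t, x)) (deriv (fun s => φ (s, x)) t)) :
    ∀ (t : ℝ) (x : Esp n), deriv (fun s => φ (s, x)) t = 0 := by
  intro t x
  have hFd : Differentiable ℝ F := hF.differentiable two_ne_zero
  have hφd : Differentiable ℝ φ := hφ.differentiable two_ne_zero
  have hGd : Differentiable ℝ (fderiv ℝ F) :=
    (hF.fderiv_right (m := 1) (by norm_num)).differentiable one_ne_zero
  have hΨd : Differentiable ℝ (fderiv ℝ φ) :=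
    (hφ.fderiv_right (m := 1) (by norm_num)).differentiable one_ne_zero
  -- derivatives of partial maps
  have hsφ : ∀ (a : ℝ) (b : Esp n), HasFDerivAt (fun z : Esp n => φ (a, z))
      ((fderiv ℝ φ (a, b)).comp (inr ℝ ℝ (Esp n))) b := fun a b => by
    have h := ((hφd (a, b)).hasFDerivAt).comp b (hasFDerivAt_prodMk_right a b)
    exact h
  have hsF : ∀ (a : ℝ) (b : Esp n), HasFDerivAt (fun z : Esp n => F (a, z))
      ((fderiv ℝ F (a, b)).comp (inr ℝ ℝ (Esp n))) b := fun a b => by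
    have h := ((hFd (a, b)).hasFDerivAt).comp b (hasFDerivAt_prodMk_right a b)
    exact h
  have htφ : ∀ (a : ℝ) (b : Esp n), HasFDerivAt (fun s : ℝ => φ (s, b))
      ((fderiv ℝ φ (a, b)).comp (inl ℝ ℝ (Esp n))) a := fun a b => by
    have h := ((hφd (a, b)).hasFDerivAt).comp a (hasFDerivAt_prodMk_left (𝕜 := ℝ) a b)
    exact h
  have htF : ∀ (a : ℝ) (b : Esp n), HasFDerivAt (fun s : ℝ => F (s, b))
      ((fderiv ℝ F (a, b)).comp (inl ℝ ℝ (Esp n))) a := fun a b => by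
    have h := ((hFd (a, b)).hasFDerivAt).comp a (hasFDerivAt_prodMk_left (𝕜 := ℝ) a b)
    exact h
  -- hypothesis (i), rephrased
  have hA : ∀ (q : ℝ × Esp n) (y : Esp n),
      fderiv ℝ F q (0, y) =
        (1/2) * (inner ℝ (stdJ n (φ q)) (fderiv ℝ φ q (0, y)) : ℝ)
          - (1/2) * (inner ℝ (stdJ n q.2) y : ℝ) := by
    rintro ⟨a, b⟩ y
    have h3 := hi a b y
    rw [(hsφ a b).fderiv] at h3
    rw [(hsF a b).hasGradientAt.gradient] at h3
    simpa [stdOmega, InnerProductSpace.toDual_symm_apply] using h3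
  -- hypothesis (ii), rephrased
  have hB : ∀ q : ℝ × Esp n,
      fderiv ℝ F q (1, 0) = (1/2) * (inner ℝ (stdJ n (φ q)) (fderiv ℝ φ q (1, 0)) : ℝ) := by
    rintro ⟨a, b⟩
    have h3 := hii a b
    rw [(htF a b).hasDerivAt.deriv, (htφ a b).hasDerivAt.deriv] at h3
    simpa [stdOmega] using h3
  -- symmetry of second derivatives
  have hGsym : ∀ v w, fderiv ℝ (fderiv ℝ F) (t, x) v w = fderiv ℝ (fderiv ℝ F) (t, x) w v :=
    second_derivative_symmetric (fun q => (hFd q).hasFDerivAt) ((hGd (t, x)).hasFDerivAt)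
  have hΨsym : ∀ v w, fderiv ℝ (fderiv ℝ φ) (t, x) v w = fderiv ℝ (fderiv ℝ φ) (t, x) w v :=
    second_derivative_symmetric (fun q => (hφd q).hasFDerivAt) ((hΨd (t, x)).hasFDerivAt)
  -- differentiate (i) at (t, x)
  have keyA : ∀ (y : Esp n) (v : ℝ × Esp n),
      fderiv ℝ (fderiv ℝ F) (t, x) v (0, y) =
        (1/2) * ((inner ℝ (stdJ n (φ (t, x))) (fderiv ℝ (fderiv ℝ φ) (t, x) v (0, y)) : ℝ)
          + (inner ℝ (stdJ n (fderiv ℝ φ (t, x) v)) (fderiv ℝ φ (t, x) (0, y)) : ℝ))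
        - (1/2) * (inner ℝ (stdJ n v.2) y : ℝ) := by
    intro y
    have hL := ((hGd (t, x)).hasFDerivAt).clm_apply
      (hasFDerivAt_const ((0, y) : ℝ × Esp n) (t, x))
    have hJφ : HasFDerivAt (fun q => (JL n) (φ q)) ((JL n).comp (fderiv ℝ φ (t, x))) (t, x) :=
      ((JL n).hasFDerivAt).comp (t, x) (hφd (t, x)).hasFDerivAt
    have hΨy := ((hΨd (t, x)).hasFDerivAt).clm_apply
      (hasFDerivAt_const ((0, y) : ℝ × Esp n) (t, x))
    have hin1 := hJφ.inner ℝ hΨy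
    have hJ2 : HasFDerivAt (fun q : ℝ × Esp n => (JL n) q.2)
        ((JL n).comp (snd ℝ ℝ (Esp n))) (t, x) :=
      ((JL n).comp (snd ℝ ℝ (Esp n))).hasFDerivAt
    have hin2 := hJ2.inner ℝ (hasFDerivAt_const y (t, x))
    have hR := (hin1.const_mul ((1:ℝ)/2)).sub (hin2.const_mul ((1:ℝ)/2))
    have h₁ : (fun q : ℝ × Esp n => fderiv ℝ F q (0, y)) =ᶠ[nhds ((t, x) : ℝ × Esp n)]
        (fun q : ℝ × Esp n =>
          (1/2) * (inner ℝ ((JL n) (φ q)) (fderiv ℝ φ q (0, y)) : ℝ)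
            - (1/2) * (inner ℝ ((JL n) q.2) y : ℝ)) :=
      Eventually.of_forall (fun q => by simpa [JL_apply] using hA q y)
    have hEq := hL.unique (hR.congr_of_eventuallyEq h₁)
    intro v
    have hv := congrArg (fun (L : (ℝ × Esp n) →L[ℝ] ℝ) => L v) hEq
    simp only [ContinuousLinearMap.add_apply, ContinuousLinearMap.comp_zero,
      ContinuousLinearMap.zero_apply, ContinuousLinearMap.flip_apply,
      ContinuousLinearMap.sub_apply, ContinuousLinearMap.smul_apply,
      ContinuousLinearMap.comp_apply, ContinuousLinearMap.prod_apply,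
      fderivInnerCLM_apply, ContinuousLinearMap.coe_comp', Function.comp_apply,
      ContinuousLinearMap.inr_apply, ContinuousLinearMap.coe_snd',
      smul_eq_mul, JL_apply, inner_zero_right, zero_add, add_zero] at hv
    linarith [hv]
  -- differentiate (ii) at (t, x)
  have keyB : ∀ v : ℝ × Esp n,
      fderiv ℝ (fderiv ℝ F) (t, x) v (1, 0) =
        (1/2) * ((inner ℝ (stdJ n (φ (t, x))) (fderiv ℝ (fderiv ℝ φ) (t, x) v (1, 0)) : ℝ)
          + (inner ℝ (stdJ n (fderiv ℝ φ (t, x) v)) (fderiv ℝ φ (t, x) (1, 0)) : ℝ)) := by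
    have hL := ((hGd (t, x)).hasFDerivAt).clm_apply
      (hasFDerivAt_const ((1, 0) : ℝ × Esp n) (t, x))
    have hJφ : HasFDerivAt (fun q => (JL n) (φ q)) ((JL n).comp (fderiv ℝ φ (t, x))) (t, x) :=
      ((JL n).hasFDerivAt).comp (t, x) (hφd (t, x)).hasFDerivAt
    have hΨy := ((hΨd (t, x)).hasFDerivAt).clm_apply
      (hasFDerivAt_const ((1, 0) : ℝ × Esp n) (t, x))
    have hin1 := hJφ.inner ℝ hΨy
    have hR := hin1.const_mul ((1:ℝ)/2)
    have h₁ : (fun q : ℝ × Esp n => fderiv ℝ F q (1, 0)) =ᶠ[nhds ((t, x) : ℝ × Esp n)]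
        (fun q : ℝ × Esp n => (1/2) * (inner ℝ ((JL n) (φ q)) (fderiv ℝ φ q (1, 0)) : ℝ)) :=
      Eventually.of_forall (fun q => by simpa [JL_apply] using hB q)
    have hEq := hL.unique (hR.congr_of_eventuallyEq h₁)
    intro v
    have hv := congrArg (fun (L : (ℝ × Esp n) →L[ℝ] ℝ) => L v) hEq
    simp only [ContinuousLinearMap.add_apply, ContinuousLinearMap.comp_zero,
      ContinuousLinearMap.zero_apply, ContinuousLinearMap.flip_apply,
      ContinuousLinearMap.sub_apply, ContinuousLinearMap.smul_apply,
      ContinuousLinearMap.comp_apply, ContinuousLinearMap.prod_apply,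
      fderivInnerCLM_apply, ContinuousLinearMap.coe_comp', Function.comp_apply,
      smul_eq_mul, JL_apply, inner_zero_right, zero_add, add_zero] at hv
    linarith [hv]
  -- notation
  set Ψ := fderiv ℝ φ (t, x) with hΨdef
  -- step 1 : ω(∂ₜφ, Dφ y) = 0
  have hu0 : ∀ y : Esp n, (inner ℝ (stdJ n (Ψ (1, 0))) (Ψ (0, y)) : ℝ) = 0 := by
    intro y
    have e1 := keyA y (1, 0)
    have e2 := keyB (0, y)
    have e3 := hGsym (1, 0) (0, y)
    have e4 := hΨsym (1, 0) (0, y)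
    have hz : ((1, 0) : ℝ × Esp n).2 = 0 := rfl
    rw [hz, stdJ_zero, inner_zero_left] at e1
    rw [e4] at e1
    have skew := inner_stdJ_skew n (Ψ (0, y)) (Ψ (1, 0))
    rw [e1, e2] at e3
    linarith
  -- step 2 : Dφ is symplectic
  have hsymp : ∀ z y : Esp n,
      (inner ℝ (stdJ n (Ψ (0, z))) (Ψ (0, y)) : ℝ) = (inner ℝ (stdJ n z) y : ℝ) := by
    intro z y
    have e1 := keyA y (0, z)
    have e2 := keyA z (0, y)
    have e3 := hGsym (0, z) (0, y)
    have e4 := hΨsym (0, z) (0, y)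
    rw [e4] at e1
    have skew1 := inner_stdJ_skew n (Ψ (0, y)) (Ψ (0, z))
    have skew2 := inner_stdJ_skew n y z
    have hz1 : ((0, z) : ℝ × Esp n).2 = z := rfl
    have hz2 : ((0, y) : ℝ × Esp n).2 = y := rfl
    rw [hz1] at e1
    rw [hz2] at e2
    rw [e1, e2] at e3
    linarith
  -- step 3 : Dφ (in the x-directions) is surjective
  set T : Esp n →L[ℝ] Esp n := Ψ.comp (inr ℝ ℝ (Esp n)) with hTdef
  have hTy : ∀ y, T y = Ψ (0, y) := fun y => rfl
  have hTinj : Function.Injective T := by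
    rw [injective_iff_map_eq_zero]
    intro z hz
    have h1 : ∀ y : Esp n, (inner ℝ (stdJ n z) y : ℝ) = 0 := by
      intro y
      rw [← hsymp z y, ← hTy z, hz, stdJ_zero, inner_zero_left]
    have h2 : stdJ n z = 0 := by
      have := h1 (stdJ n z)
      rwa [real_inner_self_eq_norm_sq, pow_eq_zero_iff (by norm_num), norm_eq_zero] at this
    have h3 := congrArg (stdJ n) h2
    rw [stdJ_stdJ, stdJ_zero] at h3
    exact neg_eq_zero.mp h3
  have hTsurj : Function.Surjective T := by
    have h := LinearMap.injective_iff_surjective (f := (T : Esp n →ₗ[ℝ] Esp n))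
    exact h.mp hTinj
  -- step 4 : conclude ∂ₜφ = 0
  have hJu : ∀ w, (inner ℝ (stdJ n (Ψ (1, 0))) w : ℝ) = 0 := by
    intro w
    obtain ⟨y, hy⟩ := hTsurj w
    rw [← hy, hTy]
    exact hu0 y
  have h1 : stdJ n (Ψ (1, 0)) = 0 := by
    have := hJu (stdJ n (Ψ (1, 0)))
    rwa [real_inner_self_eq_norm_sq, pow_eq_zero_iff (by norm_num), norm_eq_zero] at this
  have h2 : Ψ (1, 0) = 0 := by
    have h3 := congrArg (stdJ n) h1
    rw [stdJ_stdJ, stdJ_zero] at h3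
    exact neg_eq_zero.mp h3
  rw [(htφ t x).hasDerivAt.deriv]
  simpa using h2
end
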